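/- arXiv:1701.06663 — 4 statements merged into one kernel-verified Lean document; each statement's English description precedes it below -/
import Mathlib

section
/- Let (V_n)_{n≥1} be a sequence of finite Borel measures on (0,∞) with limsup_n 𝓛_{V_n}(0) > 0. Then the sequence of Laplace transforms (𝓛_{V_n})_{n≥1} has a pre-cutoff if and only if it has a cutoff. -/
open MeasureTheory Filter Set Topology


open scoped ENNReal

/-- The Laplace transform `𝓛_V(t) = ∫_{(0,∞)} e^{-tλ} dV(λ)` of a (finite Borel) measure `V`
on `(0,∞)`. -/
noncomputable def lap (V : Measure ℝ) (t : ℝ) : ℝ :=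
  ∫ x in Ioi (0 : ℝ), Real.exp (-t * x) ∂V

/-- `M = limsup_n 𝓛_{V_n}(0)`, computed in `ℝ≥0∞`. -/
noncomputable def MlimE (V : ℕ → Measure ℝ) : ℝ≥0∞ :=
  Filter.limsup (fun n => ENNReal.ofReal (lap (V n) 0)) atTop

/-- The sequence of Laplace transforms `(𝓛_{V_n})` has a cutoff: for some positive `t_n`,
`𝓛_{V_n}(a t_n) → 0` for every `a > 1` and `𝓛_{V_n}(a t_n) → M` for every `0 < a < 1`
(convergence to `M` being understood in `ℝ≥0∞`, so it means `→ ∞` when `M = ∞`). -/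
def LapCutoffGen (V : ℕ → Measure ℝ) : Prop :=
  ∃ t : ℕ → ℝ, (∀ᶠ n in atTop, 0 < t n) ∧
    (∀ a : ℝ, 1 < a → Tendsto (fun n => lap (V n) (a * t n)) atTop (𝓝 0)) ∧
    (∀ a : ℝ, a ∈ Ioo (0 : ℝ) 1 →
      Tendsto (fun n => ENNReal.ofReal (lap (V n) (a * t n))) atTop (𝓝 (MlimE V)))

/-- The sequence of Laplace transforms `(𝓛_{V_n})` has a pre-cutoff: for some positive `t_n`
and constants `0 < A < B`, `𝓛_{V_n}(B t_n) → 0` and `liminf_n 𝓛_{V_n}(A t_n) > 0`. -/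
def LapPreCutoff (V : ℕ → Measure ℝ) : Prop :=
  ∃ (t : ℕ → ℝ) (A B : ℝ), 0 < A ∧ A < B ∧ (∀ᶠ n in atTop, 0 < t n) ∧
    Tendsto (fun n => lap (V n) (B * t n)) atTop (𝓝 0) ∧
    0 < Filter.liminf (fun n => ENNReal.ofReal (lap (V n) (A * t n))) atTop


lemma lap_nonneg (V : Measure ℝ) (t : ℝ) : 0 ≤ lap V t :=
  setIntegral_nonneg measurableSet_Ioi fun x _ => (Real.exp_pos _).le

lemma lap_integrableOn (V : Measure ℝ) [IsFiniteMeasure V] {t : ℝ} (ht : 0 ≤ t) :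
    IntegrableOn (fun x => Real.exp (-t * x)) (Ioi 0) V := by
  refine Integrable.mono' (integrable_const 1) ?_ ?_
  · exact (Real.continuous_exp.comp (continuous_const.mul continuous_id)).aestronglyMeasurable
  · filter_upwards [ae_restrict_mem measurableSet_Ioi] with x hx
    rw [Real.norm_of_nonneg (Real.exp_pos _).le]
    exact Real.exp_le_one_iff.2 (by nlinarith [le_of_lt (mem_Ioi.1 hx)])

lemma lap_anti (V : Measure ℝ) [IsFiniteMeasure V] {t s : ℝ} (h0 : 0 ≤ t) (hts : t ≤ s) :
    lap V s ≤ lap V t := by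
  refine setIntegral_mono_on (lap_integrableOn V (h0.trans hts)) (lap_integrableOn V h0)
    measurableSet_Ioi fun x hx => ?_
  exact Real.exp_le_exp.2 (by nlinarith [le_of_lt (mem_Ioi.1 hx)])

lemma lap_logConvex (V : Measure ℝ) [IsFiniteMeasure V] {x y θ : ℝ} (hx : 0 ≤ x) (hy : 0 ≤ y)
    (hθ0 : 0 < θ) (hθ1 : θ < 1) :
    lap V (θ * x + (1 - θ) * y) ≤ (lap V x) ^ θ * (lap V y) ^ (1 - θ) := by
  set μ := V.restrict (Ioi (0:ℝ)) with hμ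
  have hconj : (1/θ).HolderConjugate (1/(1-θ)) :=
    Real.holderConjugate_one_div hθ0 (by linarith) (by ring)
  have hf : MemLp (fun a => Real.exp (-x * a) ^ θ) (ENNReal.ofReal (1/θ)) μ := by
    refine MemLp.of_bound ?_ 1 ?_
    · exact ((Real.continuous_exp.comp (continuous_const.mul continuous_id)).rpow_const
        (fun a => Or.inl (Real.exp_ne_zero _))).aestronglyMeasurable
    · filter_upwards [ae_restrict_mem measurableSet_Ioi] with a ha
      rw [Real.norm_of_nonneg (Real.rpow_nonneg (Real.exp_pos _).le _)]
      exact Real.rpow_le_one (Real.exp_pos _).le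
        (Real.exp_le_one_iff.2 (by nlinarith [le_of_lt (mem_Ioi.1 ha)])) hθ0.le
  have hg : MemLp (fun a => Real.exp (-y * a) ^ (1-θ)) (ENNReal.ofReal (1/(1-θ))) μ := by
    refine MemLp.of_bound ?_ 1 ?_
    · exact ((Real.continuous_exp.comp (continuous_const.mul continuous_id)).rpow_const
        (fun a => Or.inl (Real.exp_ne_zero _))).aestronglyMeasurable
    · filter_upwards [ae_restrict_mem measurableSet_Ioi] with a ha
      rw [Real.norm_of_nonneg (Real.rpow_nonneg (Real.exp_pos _).le _)]
      exact Real.rpow_le_one (Real.exp_pos _).le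
        (Real.exp_le_one_iff.2 (by nlinarith [le_of_lt (mem_Ioi.1 ha)])) (by linarith)
  have H := integral_mul_le_Lp_mul_Lq_of_nonneg hconj
    (Eventually.of_forall fun a => Real.rpow_nonneg (Real.exp_pos _).le _)
    (Eventually.of_forall fun a => Real.rpow_nonneg (Real.exp_pos _).le _) hf hg
  have e1 : ∀ a : ℝ, Real.exp (-x*a) ^ θ * Real.exp (-y*a) ^ (1-θ)
      = Real.exp (-(θ*x + (1-θ)*y) * a) := by
    intro a
    rw [← Real.exp_mul, ← Real.exp_mul, ← Real.exp_add]
    ring_nf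
  have e2 : ∀ a : ℝ, (Real.exp (-x*a) ^ θ) ^ (1/θ) = Real.exp (-x*a) := by
    intro a
    rw [← Real.rpow_mul (Real.exp_pos _).le, mul_one_div, div_self hθ0.ne', Real.rpow_one]
  have e3 : ∀ a : ℝ, (Real.exp (-y*a) ^ (1-θ)) ^ (1/(1-θ)) = Real.exp (-y*a) := by
    intro a
    have h1θ : (1:ℝ) - θ ≠ 0 := by linarith
    rw [← Real.rpow_mul (Real.exp_pos _).le, mul_one_div, div_self h1θ, Real.rpow_one]
  simp only [e1, e2, e3] at H
  calc lap V (θ*x + (1-θ)*y) = ∫ a, Real.exp (-(θ*x + (1-θ)*y) * a) ∂μ := rfl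
    _ ≤ (∫ a, Real.exp (-x*a) ∂μ) ^ (1/(1/θ)) * (∫ a, Real.exp (-y*a) ∂μ) ^ (1/(1/(1-θ))) := by
        rw [one_div_one_div, one_div_one_div]
        convert H using 2 <;> rw [one_div_one_div]
    _ = (lap V x) ^ θ * (lap V y) ^ (1 - θ) := by rw [one_div_one_div, one_div_one_div]; rfl

lemma lap_continuousOn (V : Measure ℝ) [IsFiniteMeasure V] : ContinuousOn (lap V) (Ici 0) := by
  intro t0 ht0
  have : Tendsto (fun t => lap V t) (𝓝[Ici 0] t0) (𝓝 (lap V t0)) := by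
    refine tendsto_integral_filter_of_dominated_convergence (fun _ => (1:ℝ)) ?_ ?_ ?_ ?_
    · exact Eventually.of_forall fun t =>
        (Real.continuous_exp.comp (continuous_const.mul continuous_id)).aestronglyMeasurable
    · filter_upwards [self_mem_nhdsWithin] with t ht
      filter_upwards [ae_restrict_mem measurableSet_Ioi] with a ha
      rw [Real.norm_of_nonneg (Real.exp_pos _).le]
      exact Real.exp_le_one_iff.2 (by nlinarith [le_of_lt (mem_Ioi.1 ha), mem_Ici.1 ht])
    · exact integrable_const 1
    · refine Eventually.of_forall fun a => ?_
      have : Continuous fun t : ℝ => Real.exp (-t * a) :=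
        Real.continuous_exp.comp ((continuous_neg.comp continuous_id).mul continuous_const)
      exact (this.tendsto t0).mono_left nhdsWithin_le_nhds
  exact this

theorem stmt_1 (V : ℕ → Measure ℝ) [∀ n, IsFiniteMeasure (V n)]
    (hsupp : ∀ n, V n (Iic 0) = 0)
    (hM : 0 < MlimE V) :
    LapPreCutoff V ↔ LapCutoffGen V := by
  classical
  constructor
  · rintro ⟨t, A, B, hA, hAB, htpos, hB0, hlim⟩
    set c := B / A with hc_def
    have hc : 1 < c := (one_lt_div hA).2 hAB
    have hcA : c * A = B := div_mul_cancel₀ B hA.ne'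
    -- extract δ
    set L := Filter.liminf (fun n => ENNReal.ofReal (lap (V n) (A * t n))) atTop with hL
    have hmin0 : min L 1 ≠ 0 := by
      simp only [ne_eq, min_eq_iff]
      rintro (⟨h, -⟩ | ⟨h, -⟩) <;> simp_all
    have hminT : min L 1 ≠ ⊤ := by
      intro h
      have := (min_le_right L 1).trans_eq' h
      simp at this
    have hc0lt : min L 1 / 2 < L :=
      lt_of_lt_of_le (ENNReal.half_lt_self hmin0 hminT) (min_le_left _ _)
    have hc0T : min L 1 / 2 ≠ ⊤ := ne_top_of_le_ne_top hminT ENNReal.half_le_self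
    have hc0pos : 0 < min L 1 / 2 := ENNReal.half_pos hmin0
    set δ : ℝ := (min L 1 / 2).toReal with hδ_def
    have hδ : 0 < δ := ENNReal.toReal_pos hc0pos.ne' hc0T
    have hev1 : ∀ᶠ n in atTop, δ < lap (V n) (A * t n) := by
      filter_upwards [eventually_lt_of_lt_liminf hc0lt] with n hn
      have := (ENNReal.toReal_lt_toReal hc0T ENNReal.ofReal_ne_top).2 hn
      rwa [ENNReal.toReal_ofReal (lap_nonneg _ _)] at this
    have hev2 : ∀ᶠ n in atTop, lap (V n) (B * t n) < δ / 2 :=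
      hB0.eventually_lt_const (by linarith)
    -- quantile times
    have hex : ∀ᶠ n in atTop,
        ∃ w, w ∈ Icc (A * t n) (B * t n) ∧ lap (V n) w = δ / 2 := by
      filter_upwards [htpos, hev1, hev2] with n h0 h1 h2
      have hab : A * t n ≤ B * t n := by nlinarith
      have hcont : ContinuousOn (lap (V n)) (Icc (A * t n) (B * t n)) :=
        (lap_continuousOn (V n)).mono fun z hz =>
          le_trans (by positivity : (0:ℝ) ≤ A * t n) hz.1
      have hmem : δ / 2 ∈ Icc (lap (V n) (B * t n)) (lap (V n) (A * t n)) :=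
        ⟨h2.le, by linarith⟩
      obtain ⟨w, hw, hweq⟩ := intermediate_value_Icc' hab hcont hmem
      exact ⟨w, hw, hweq⟩
    set u : ℕ → ℝ := fun n =>
      if h : ∃ w, w ∈ Icc (A * t n) (B * t n) ∧ lap (V n) w = δ / 2 then h.choose else 1
      with hu_def
    have hu : ∀ᶠ n in atTop,
        u n ∈ Icc (A * t n) (B * t n) ∧ lap (V n) (u n) = δ / 2 := by
      filter_upwards [hex] with n hn
      simp only [hu_def, dif_pos hn]
      exact hn.choose_spec
    have hupos : ∀ᶠ n in atTop, 0 < u n := by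
      filter_upwards [htpos, hu] with n h0 hn
      exact lt_of_lt_of_le (by positivity) hn.1.1
    -- c * u n ≥ B * t n
    have hcu : ∀ᶠ n in atTop, lap (V n) (c * u n) ≤ lap (V n) (B * t n) := by
      filter_upwards [htpos, hu] with n h0 hn
      refine lap_anti (V n) (by nlinarith) ?_
      calc B * t n = c * (A * t n) := by rw [← hcA]; ring
        _ ≤ c * u n := by
            have := hn.1.1
            nlinarith
    -- a > 1 : tendsto 0
    have key2 : ∀ a : ℝ, 1 < a → Tendsto (fun n => lap (V n) (a * u n)) atTop (𝓝 0) := by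
      intro a ha
      set b := min a ((1 + c) / 2) with hb_def
      have hb1 : 1 < b := lt_min ha (by linarith)
      have hbc : b < c := lt_of_le_of_lt (min_le_right _ _) (by linarith)
      have hba : b ≤ a := min_le_left _ _
      set θ := (c - b) / (c - 1) with hθ_def
      have hθ0 : 0 < θ := div_pos (by linarith) (by linarith)
      have hθ1 : θ < 1 := (div_lt_one (by linarith)).2 (by linarith)
      have hθe : θ * (c - 1) = c - b := by
        rw [hθ_def]; exact div_mul_cancel₀ _ (by linarith)
      have hbound : ∀ᶠ n in atTop,
          lap (V n) (a * u n) ≤ (δ/2) ^ θ * (lap (V n) (B * t n)) ^ (1 - θ) := by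
        filter_upwards [htpos, hu, hupos, hcu] with n h0 hn hu0 hcun
        have h1 : lap (V n) (a * u n) ≤ lap (V n) (b * u n) :=
          lap_anti (V n) (by positivity) (by nlinarith)
        have h2 : θ * u n + (1 - θ) * (c * u n) = b * u n := by
          linear_combination (-(u n)) * hθe
        have h3 : lap (V n) (b * u n) ≤
            (lap (V n) (u n)) ^ θ * (lap (V n) (c * u n)) ^ (1 - θ) := by
          have := lap_logConvex (V n) (x := u n) (y := c * u n) hu0.le (by positivity) hθ0 hθ1
          rwa [h2] at this
        have h4 : (lap (V n) (c * u n)) ^ (1 - θ) ≤ (lap (V n) (B * t n)) ^ (1 - θ) :=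
          Real.rpow_le_rpow (lap_nonneg _ _) hcun (by linarith)
        calc lap (V n) (a * u n) ≤ (lap (V n) (u n)) ^ θ * (lap (V n) (c * u n)) ^ (1 - θ) :=
              h1.trans h3
          _ ≤ (δ/2) ^ θ * (lap (V n) (B * t n)) ^ (1 - θ) := by
              rw [hn.2]
              exact mul_le_mul_of_nonneg_left h4 (Real.rpow_nonneg (by linarith) _)
      refine squeeze_zero' (Eventually.of_forall fun n => lap_nonneg _ _) hbound ?_
      have hrc : ContinuousAt (fun x : ℝ => x ^ (1 - θ)) 0 :=
        Real.continuousAt_rpow_const 0 (1 - θ) (Or.inr (by linarith))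
      have h5 : Tendsto (fun n => (lap (V n) (B * t n)) ^ (1 - θ)) atTop (𝓝 0) := by
        have := hrc.tendsto.comp hB0
        simpa [Function.comp_def, Real.zero_rpow (by linarith : (1:ℝ) - θ ≠ 0)] using this
      simpa using h5.const_mul ((δ/2) ^ θ)
    -- a < 1 : to infinity
    have key3 : ∀ a : ℝ, 0 < a → a < 1 → ∀ K : ℝ, 0 < K →
        ∀ᶠ n in atTop, K < lap (V n) (a * u n) := by
      intro a ha0 ha1 K hK
      set θ := (c - 1) / (c - a) with hθ_def
      have hθ0 : 0 < θ := div_pos (by linarith) (by linarith)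
      have hθ1 : θ < 1 := (div_lt_one (by linarith)).2 (by linarith)
      have hθe : θ * (c - a) = c - 1 := by
        rw [hθ_def]; exact div_mul_cancel₀ _ (by linarith)
      have hrc : ContinuousAt (fun x : ℝ => x ^ (1 - θ)) 0 :=
        Real.continuousAt_rpow_const 0 (1 - θ) (Or.inr (by linarith))
      have h5 : Tendsto (fun n => (lap (V n) (B * t n)) ^ (1 - θ) * K ^ θ) atTop (𝓝 0) := by
        have := (hrc.tendsto.comp hB0).mul_const (K ^ θ)
        simpa [Real.zero_rpow (by linarith : (1:ℝ) - θ ≠ 0)] using this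
      have hev3 : ∀ᶠ n in atTop, (lap (V n) (B * t n)) ^ (1 - θ) * K ^ θ < δ / 2 :=
        h5.eventually_lt_const (by linarith)
      filter_upwards [htpos, hu, hupos, hcu, hev3] with n h0 hn hu0 hcun h3
      by_contra hcon
      push_neg at hcon
      have h2 : θ * (a * u n) + (1 - θ) * (c * u n) = u n := by
        linear_combination (-(u n)) * hθe
      have hlc : lap (V n) (u n) ≤
          (lap (V n) (a * u n)) ^ θ * (lap (V n) (c * u n)) ^ (1 - θ) := by
        have := lap_logConvex (V n) (x := a * u n) (y := c * u n)
          (by positivity) (by positivity) hθ0 hθ1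
        rwa [h2] at this
      have hm1 : (lap (V n) (a * u n)) ^ θ ≤ K ^ θ :=
        Real.rpow_le_rpow (lap_nonneg _ _) hcon hθ0.le
      have hm2 : (lap (V n) (c * u n)) ^ (1 - θ) ≤ (lap (V n) (B * t n)) ^ (1 - θ) :=
        Real.rpow_le_rpow (lap_nonneg _ _) hcun (by linarith)
      have : δ / 2 ≤ K ^ θ * (lap (V n) (B * t n)) ^ (1 - θ) := by
        rw [← hn.2]
        calc lap (V n) (u n)
            ≤ (lap (V n) (a * u n)) ^ θ * (lap (V n) (c * u n)) ^ (1 - θ) := hlc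
          _ ≤ K ^ θ * (lap (V n) (B * t n)) ^ (1 - θ) := by
              apply mul_le_mul hm1 hm2 (Real.rpow_nonneg (lap_nonneg _ _) _)
                (Real.rpow_nonneg hK.le _)
      nlinarith [this, h3]
    -- mass to infinity
    have keyhalf : ∀ K : ℝ, 0 < K → ∀ᶠ n in atTop, K < lap (V n) 0 := by
      intro K hK
      filter_upwards [key3 (1/2) (by norm_num) (by norm_num) K hK, hupos] with n h1 h2
      exact h1.trans_le (lap_anti (V n) le_rfl (by positivity))
    have hMtop : MlimE V = ⊤ := by
      have htt : Tendsto (fun n => ENNReal.ofReal (lap (V n) 0)) atTop (𝓝 ⊤) := by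
        rw [ENNReal.tendsto_nhds_top_iff_nnreal]
        intro x
        filter_upwards [keyhalf ((x : ℝ) + 1) (by positivity)] with n hn
        rw [← ENNReal.ofReal_coe_nnreal]
        exact ENNReal.ofReal_lt_ofReal_iff (by linarith [x.coe_nonneg]) |>.2
          (by linarith [x.coe_nonneg])
      exact htt.limsup_eq
    refine ⟨u, hupos, key2, fun a ha => ?_⟩
    rw [hMtop, ENNReal.tendsto_nhds_top_iff_nnreal]
    intro x
    filter_upwards [key3 a ha.1 ha.2 ((x : ℝ) + 1) (by positivity)] with n hn
    rw [← ENNReal.ofReal_coe_nnreal]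
    exact ENNReal.ofReal_lt_ofReal_iff (by linarith [x.coe_nonneg]) |>.2
      (by linarith [x.coe_nonneg])
  · rintro ⟨t, ht, h1, h2⟩
    refine ⟨t, 1/2, 2, by norm_num, by norm_num, ht, h1 2 one_lt_two, ?_⟩
    rw [(h2 (1/2) ⟨by norm_num, by norm_num⟩).liminf_eq]
    exact hM
end

section
/- Let (V_n)_{n≥1} be a sequence of finite Borel measures on (0,∞) with 𝓛_{V_n}(0) → ∞, and let 0 < c < c′. Then: (i) for any fixed ε > 0, if T_{V_n}(ε)·λ_{V_n}(c) → ∞ then T_{V_n}(ε)·λ_{V_n}(c′) → ∞; and (ii) if τ_{V_n}(c)·λ_{V_n}(c) → ∞ then τ_{V_n}(c′)·λ_{V_n}(c′) → ∞. -/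
open MeasureTheory Filter Set Topology

/-- `V(λ) = V((0,λ])`, the nondecreasing right-continuous function associated to `V`. -/
noncomputable def cdfV (V : Measure ℝ) (l : ℝ) : ℝ :=
  (V (Ioc 0 l)).toReal

/-- The mixing time `T_V(ε) = min{t ≥ 0 : 𝓛_V(t) ≤ ε}`. -/
noncomputable def TmixV (V : Measure ℝ) (ε : ℝ) : ℝ :=
  sInf {t : ℝ | 0 ≤ t ∧ lap V t ≤ ε}

/-- `λ_V(c) = inf{λ > 0 : V(λ) > c}`. -/
noncomputable def lamV (V : Measure ℝ) (c : ℝ) : ℝ :=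
  sInf {l : ℝ | 0 < l ∧ c < cdfV V l}

/-- `τ_V(c) = sup_{λ ≥ λ_V(c)} log(1 + V(λ))/λ`. -/
noncomputable def tauV (V : Measure ℝ) (c : ℝ) : ℝ :=
  sSup ((fun l => Real.log (1 + cdfV V l) / l) '' Ici (lamV V c))

/-- `t` is a cutoff time for the sequence of Laplace transforms `(𝓛_{V_n})` (in the regime
`𝓛_{V_n}(0) → ∞`): `𝓛_{V_n}(a t_n) → 0` for `a > 1` and `𝓛_{V_n}(a t_n) → ∞` for `0 < a < 1`. -/
def IsLapCutoffTime (V : ℕ → Measure ℝ) (t : ℕ → ℝ) : Prop :=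
  (∀ᶠ n in atTop, 0 < t n) ∧
    (∀ a : ℝ, 1 < a → Tendsto (fun n => lap (V n) (a * t n)) atTop (𝓝 0)) ∧
    (∀ a : ℝ, a ∈ Ioo (0 : ℝ) 1 → Tendsto (fun n => lap (V n) (a * t n)) atTop atTop)

/-- The sequence of Laplace transforms `(𝓛_{V_n})` has a cutoff. -/
def LapCutoff (V : ℕ → Measure ℝ) : Prop :=
  ∃ t : ℕ → ℝ, IsLapCutoffTime V t

lemma lamV_nonneg (V : Measure ℝ) (c : ℝ) : 0 ≤ lamV V c :=
  Real.sInf_nonneg (fun _ hx => hx.1.le)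

lemma TmixV_nonneg (V : Measure ℝ) (ε : ℝ) : 0 ≤ TmixV V ε :=
  Real.sInf_nonneg (fun _ hx => hx.1)

lemma cdfV_nonneg (V : Measure ℝ) (l : ℝ) : 0 ≤ cdfV V l := ENNReal.toReal_nonneg

lemma bddBelow_lamSet (V : Measure ℝ) (c : ℝ) :
    BddBelow {l : ℝ | 0 < l ∧ c < cdfV V l} :=
  ⟨0, fun _ hx => hx.1.le⟩

lemma lamV_mono (V : Measure ℝ) {c c' : ℝ} (hcc' : c ≤ c')
    (hne : {l : ℝ | 0 < l ∧ c' < cdfV V l}.Nonempty) : lamV V c ≤ lamV V c' :=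
  csInf_le_csInf (bddBelow_lamSet V c) hne (fun _ hx => ⟨hx.1, lt_of_le_of_lt hcc' hx.2⟩)

lemma ev_nonempty (V : ℕ → Measure ℝ) [∀ n, IsFiniteMeasure (V n)]
    (hdiv : Tendsto (fun n => lap (V n) 0) atTop atTop) (c' : ℝ) :
    ∀ᶠ n in atTop, {l : ℝ | 0 < l ∧ c' < cdfV (V n) l}.Nonempty := by
  filter_upwards [hdiv.eventually_gt_atTop c'] with n hn
  have hlap : lap (V n) 0 = (V n (Ioi 0)).toReal := by
    simp [lap, MeasureTheory.setIntegral_const]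
    rfl
  rw [hlap] at hn
  have hmono : Monotone (fun m : ℕ => Ioc (0:ℝ) (m+1)) := by
    intro a b hab
    exact Ioc_subset_Ioc_right (by have := (Nat.cast_le (α := ℝ)).2 hab; linarith)
  have hU : ⋃ m : ℕ, Ioc (0:ℝ) (m+1) = Ioi 0 := by
    ext x
    simp only [mem_iUnion, mem_Ioc, mem_Ioi]
    constructor
    · rintro ⟨m, hm, _⟩; exact hm
    · intro hx
      obtain ⟨m, hm⟩ := exists_nat_ge x
      exact ⟨m, hx, by linarith⟩
  have htend := tendsto_measure_iUnion_atTop (μ := V n) hmono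
  rw [hU] at htend
  have htr : Tendsto (fun m : ℕ => (V n (Ioc 0 (m+1:ℝ))).toReal) atTop
      (𝓝 ((V n (Ioi 0)).toReal)) :=
    (ENNReal.tendsto_toReal (measure_ne_top _ _)).comp htend
  obtain ⟨m, hm⟩ := (htr.eventually (eventually_gt_nhds hn)).exists
  exact ⟨(m:ℝ)+1, by positivity, hm⟩

lemma tau_step (V : Measure ℝ) [IsFiniteMeasure V] {c c' : ℝ} (hc' : 0 < c') (hcc' : c < c')
    (hne : {l : ℝ | 0 < l ∧ c' < cdfV V l}.Nonempty)
    (hbig : Real.log (1 + c') < tauV V c * lamV V c) :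
    tauV V c * lamV V c ≤ tauV V c' * lamV V c' := by
  set f : ℝ → ℝ := fun l => Real.log (1 + cdfV V l) / l with hf
  set lc := lamV V c with hlc
  set lc' := lamV V c' with hlc'
  have hB : 0 < Real.log (1 + c') := Real.log_pos (by linarith)
  have hprod : 0 < tauV V c * lc := lt_trans hB hbig
  have hlc_nonneg : 0 ≤ lc := lamV_nonneg V c
  have hlc_pos : 0 < lc := by
    rcases hlc_nonneg.lt_or_eq with h | h
    · exact h
    · exfalso; rw [← h] at hprod; simp at hprod
  have htau_pos : 0 < tauV V c := by nlinarith
  have hlcc' : lc ≤ lc' := lamV_mono V hcc'.le hne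
  have hlc'_pos : 0 < lc' := lt_of_lt_of_le hlc_pos hlcc'
  have hSc_bdd : BddAbove (f '' Ici lc) := by
    by_contra h
    have := Real.sSup_of_not_bddAbove h
    rw [tauV] at htau_pos
    rw [← hf, ← hlc, this] at htau_pos
    exact lt_irrefl 0 htau_pos
  have hSsub : f '' Ici lc' ⊆ f '' Ici lc := image_mono (Ici_subset_Ici.2 hlcc')
  have hSc'_bdd : BddAbove (f '' Ici lc') := hSc_bdd.mono hSsub
  have htauc' : tauV V c' = sSup (f '' Ici lc') := rfl
  have htauc : tauV V c = sSup (f '' Ici lc) := rfl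
  have htau'_nonneg : 0 ≤ tauV V c' := by
    have hmem : f lc' ∈ f '' Ici lc' := ⟨lc', self_mem_Ici, rfl⟩
    have hfnn : 0 ≤ f lc' :=
      div_nonneg (Real.log_nonneg (by linarith [cdfV_nonneg V lc'])) hlc'_pos.le
    exact le_trans hfnn (by rw [htauc']; exact le_csSup hSc'_bdd hmem)
  set M := max (tauV V c' * lc') (Real.log (1 + c')) with hM
  have key : ∀ l ∈ Ici lc, f l * lc ≤ M := by
    intro l hl
    have hl' : lc ≤ l := hl
    have hlpos : 0 < l := lt_of_lt_of_le hlc_pos hl'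
    by_cases hcase : lc' ≤ l
    · have h1 : f l ≤ tauV V c' := by
        rw [htauc']; exact le_csSup hSc'_bdd ⟨l, hcase, rfl⟩
      have : f l * lc ≤ tauV V c' * lc' :=
        mul_le_mul h1 hlcc' hlc_nonneg htau'_nonneg
      exact le_trans this (le_max_left _ _)
    · push_neg at hcase
      have hcdf : cdfV V l ≤ c' := by
        by_contra h
        push_neg at h
        have : lc' ≤ l := csInf_le (bddBelow_lamSet V c') ⟨hlpos, h⟩
        linarith
      have h1 : Real.log (1 + cdfV V l) ≤ Real.log (1 + c') :=
        Real.log_le_log (by linarith [cdfV_nonneg V l]) (by linarith)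
      have h2 : lc / l ≤ 1 := (div_le_one hlpos).2 hl'
      have heq : f l * lc = Real.log (1 + cdfV V l) * (lc / l) := by
        field_simp [hf]
        simp only [hf]
        exact div_mul_cancel₀ _ hlpos.ne'
      rw [heq]
      have : Real.log (1 + cdfV V l) * (lc / l) ≤ Real.log (1 + c') * 1 :=
        mul_le_mul h1 h2 (div_nonneg hlc_nonneg hlpos.le)
          (Real.log_nonneg (by linarith))
      rw [mul_one] at this
      exact le_trans this (le_max_right _ _)
  have htle : tauV V c ≤ M / lc := by
    rw [htauc]
    apply csSup_le (Set.Nonempty.image f nonempty_Ici)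
    rintro y ⟨l, hl, rfl⟩
    rw [le_div_iff₀ hlc_pos]
    exact key l hl
  have hprodle : tauV V c * lc ≤ M := (le_div_iff₀ hlc_pos).mp htle
  rcases le_max_iff.mp hprodle with h | h
  · exact h
  · linarith

theorem stmt_5 (V : ℕ → Measure ℝ) [∀ n, IsFiniteMeasure (V n)]
    (hsupp : ∀ n, V n (Iic 0) = 0)
    (hdiv : Tendsto (fun n => lap (V n) 0) atTop atTop)
    (c c' : ℝ) (hc : 0 < c) (hcc' : c < c') :
    (∀ ε > (0 : ℝ),
      Tendsto (fun n => TmixV (V n) ε * lamV (V n) c) atTop atTop →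
        Tendsto (fun n => TmixV (V n) ε * lamV (V n) c') atTop atTop) ∧
      (Tendsto (fun n => tauV (V n) c * lamV (V n) c) atTop atTop →
        Tendsto (fun n => tauV (V n) c' * lamV (V n) c') atTop atTop) := by
  constructor
  · intro ε _ hT
    refine tendsto_atTop_mono' atTop ?_ hT
    filter_upwards [ev_nonempty V hdiv c'] with n hn
    exact mul_le_mul_of_nonneg_left (lamV_mono (V n) hcc'.le hn) (TmixV_nonneg (V n) ε)
  · intro hT
    refine tendsto_atTop_mono' atTop ?_ hT
    filter_upwards [ev_nonempty V hdiv c',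
      hT.eventually_gt_atTop (Real.log (1 + c'))] with n hn hbig
    exact tau_step (V n) (lt_trans hc hcc') hcc' hn hbig
end

section
/- Let V be a finite Borel measure on (0,∞) and c ∈ (0, 𝓛_V(0)). Then 𝓛_V(τ_V(c)) ≥ c/(1+c), and for every s > 0 one has 𝓛_V(τ_V(c) + s) ≤ c + (τ_V(c) + s) / (s · e^{s·λ_V(c)}). -/
open MeasureTheory Filter Set Topology

section aux
open Real
open scoped ENNReal

lemma integral_exp_neg_mul_Ioi' {b : ℝ} (hb : 0 < b) (a : ℝ) :
    ∫ u in Ioi a, Real.exp (-b * u) = Real.exp (-b * a) / b := by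
  have hderiv : ∀ x ∈ Ici a, HasDerivAt (fun u => -Real.exp (-b * u) / b)
      (Real.exp (-b * x)) x := by
    intro x _
    have h1 : HasDerivAt (fun u => -b * u) (-b) x := by
      simpa using (hasDerivAt_id x).const_mul (-b)
    have h2 := (h1.exp).neg.div_const b
    convert h2 using 1
    · rfl
    · rfl
    · rfl
    rw [mul_neg, neg_neg, mul_div_assoc, div_self hb.ne', mul_one]
  have htend : Tendsto (fun u => -Real.exp (-b * u) / b) atTop (𝓝 0) := by
    have : Tendsto (fun u => Real.exp (-b * u)) atTop (𝓝 0) := by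
      simpa using Real.tendsto_exp_comp_nhds_zero.mpr
        (tendsto_id.const_mul_atTop_of_neg (neg_lt_zero.mpr hb))
    simpa using (this.neg.div_const b)
  have := integral_Ioi_of_hasDerivAt_of_tendsto' hderiv
    (exp_neg_integrableOn_Ioi a hb) htend
  rw [this]; ring

lemma tail_bound (V : Measure ℝ) [IsFiniteMeasure V] {lam τ s : ℝ}
    (hlam : 0 < lam) (hs : 0 < s) (hτ : 0 ≤ τ)
    (hcdf : ∀ u, lam < u → cdfV V u ≤ Real.exp (τ * u) - 1)
    (hint : IntegrableOn (fun x => Real.exp (-(τ + s) * x)) (Ici lam) V) :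
    ∫ x in Ici lam, Real.exp (-(τ + s) * x) ∂V ≤ (τ + s) * Real.exp (-s * lam) / s := by
  set t := τ + s with ht
  have htpos : 0 < t := by positivity
  have h0 : ENNReal.ofReal (∫ x in Ici lam, Real.exp (-t * x) ∂V)
      = ∫⁻ x in Ici lam, ENNReal.ofReal (Real.exp (-t * x)) ∂V := by
    exact ofReal_integral_eq_lintegral_ofReal hint
      (Filter.Eventually.of_forall fun x => (Real.exp_pos _).le)
  have hinner : ∀ x : ℝ, ENNReal.ofReal (Real.exp (-t * x))
      = ∫⁻ u in Ioi x, ENNReal.ofReal (t * Real.exp (-t * u)) := by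
    intro x
    have hint2 : IntegrableOn (fun u => t * Real.exp (-t * u)) (Ioi x) :=
      (exp_neg_integrableOn_Ioi x htpos).const_mul t
    rw [← ofReal_integral_eq_lintegral_ofReal hint2
      (Filter.Eventually.of_forall fun u => by positivity)]
    congr 1
    rw [MeasureTheory.integral_const_mul, integral_exp_neg_mul_Ioi' htpos x]
    field_simp
  set C : ℝ → ℝ≥0∞ := fun u => ENNReal.ofReal (t * Real.exp (-t * u)) with hC
  have hmeasC : Measurable C := by
    apply ENNReal.measurable_ofReal.comp
    exact (measurable_const.mul ((measurable_id.const_mul (-t)).exp))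
  have hswap : ∫⁻ x in Ici lam, ∫⁻ u, (Ioi x).indicator C u ∂(volume) ∂V
      = ∫⁻ u, ∫⁻ x in Ici lam, (Ioi x).indicator C u ∂V ∂(volume) := by
    apply lintegral_lintegral_swap
    have heq : (Function.uncurry fun x u => (Ioi x).indicator C u)
        = {q : ℝ × ℝ | q.1 < q.2}.indicator (fun q => C q.2) := by
      funext p
      rcases p with ⟨x, u⟩
      by_cases h : x < u <;>
        simp [Function.uncurry, Set.indicator, h, Set.mem_Ioi]
    rw [heq]
    exact ((hmeasC.comp measurable_snd).indicator
      (measurableSet_lt measurable_fst measurable_snd)).aemeasurable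
  have hptwise : ∀ u : ℝ, ∫⁻ x in Ici lam, (Ioi x).indicator C u ∂V
      ≤ (Ioi lam).indicator
        (fun u => ENNReal.ofReal (t * Real.exp (-t * u) * Real.exp (τ * u))) u := by
    intro u
    have hrw : (fun x => (Ioi x).indicator C u) = (Iio u).indicator (fun _ => C u) := by
      funext x
      by_cases h : x < u <;> simp [Set.indicator, h, Set.mem_Ioi, Set.mem_Iio]
    rw [hrw, lintegral_indicator measurableSet_Iio, setLIntegral_const,
      Measure.restrict_apply measurableSet_Iio]
    by_cases hu : lam < u
    · have hsub : Iio u ∩ Ici lam ⊆ Ioc 0 u := fun x hx =>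
        ⟨lt_of_lt_of_le hlam hx.2, (hx.1 : x < u).le⟩
      have h1 : V (Iio u ∩ Ici lam) ≤ ENNReal.ofReal (Real.exp (τ * u)) := by
        refine le_trans (measure_mono hsub) ?_
        have : V (Ioc 0 u) = ENNReal.ofReal (cdfV V u) :=
          (ENNReal.ofReal_toReal (measure_ne_top V _)).symm
        rw [this]
        exact ENNReal.ofReal_le_ofReal (le_trans (hcdf u hu)
          (by linarith [Real.exp_pos (τ * u)]))
      calc C u * V (Iio u ∩ Ici lam) ≤ C u * ENNReal.ofReal (Real.exp (τ * u)) :=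
            mul_le_mul_right h1 _
        _ = ENNReal.ofReal (t * Real.exp (-t * u) * Real.exp (τ * u)) := by
            rw [hC, ← ENNReal.ofReal_mul (by positivity)]
        _ = (Ioi lam).indicator
              (fun u => ENNReal.ofReal (t * Real.exp (-t * u) * Real.exp (τ * u))) u := by
            rw [Set.indicator_of_mem (Set.mem_Ioi.mpr hu)]
    · have : Iio u ∩ Ici lam = ∅ := by
        ext x
        simp only [Set.mem_inter_iff, Set.mem_Iio, Set.mem_Ici, Set.mem_empty_iff_false,
          iff_false, not_and, not_le]
        intro hxu
        exact lt_of_lt_of_le hxu (not_lt.mp hu)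
      rw [this, measure_empty, mul_zero]
      exact bot_le
  have key : ∫⁻ x in Ici lam, ENNReal.ofReal (Real.exp (-t * x)) ∂V
      ≤ ENNReal.ofReal (t * Real.exp (-s * lam) / s) := by
    calc ∫⁻ x in Ici lam, ENNReal.ofReal (Real.exp (-t * x)) ∂V
        = ∫⁻ x in Ici lam, ∫⁻ u, (Ioi x).indicator C u ∂(volume) ∂V := by
          apply lintegral_congr
          intro x
          rw [hinner x, lintegral_indicator measurableSet_Ioi]
      _ = ∫⁻ u, ∫⁻ x in Ici lam, (Ioi x).indicator C u ∂V ∂(volume) := hswap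
      _ ≤ ∫⁻ u, (Ioi lam).indicator
            (fun u => ENNReal.ofReal (t * Real.exp (-t * u) * Real.exp (τ * u))) u ∂(volume) :=
          lintegral_mono hptwise
      _ = ∫⁻ u in Ioi lam, ENNReal.ofReal (t * Real.exp (-s * u)) ∂(volume) := by
          rw [lintegral_indicator measurableSet_Ioi]
          apply lintegral_congr
          intro u
          congr 1
          rw [mul_assoc, ← Real.exp_add]
          rw [ht]; ring_nf
      _ = ENNReal.ofReal (∫ u in Ioi lam, t * Real.exp (-s * u)) := by
          refine (ofReal_integral_eq_lintegral_ofReal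
            ((exp_neg_integrableOn_Ioi lam hs).const_mul t)
            (Filter.Eventually.of_forall fun u => by positivity)).symm
      _ = ENNReal.ofReal (t * Real.exp (-s * lam) / s) := by
          rw [MeasureTheory.integral_const_mul, integral_exp_neg_mul_Ioi' hs, mul_div_assoc]
  have hB : (0:ℝ) ≤ t * Real.exp (-s * lam) / s := by positivity
  have := h0 ▸ key
  exact (ENNReal.ofReal_le_ofReal_iff hB).mp this

end aux

set_option maxHeartbeats 1000000 in
theorem stmt_7 (V : Measure ℝ) [IsFiniteMeasure V] (hsupp : V (Iic 0) = 0)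
    (c : ℝ) (hc : 0 < c) (hclt : c < lap V 0) :
    c / (1 + c) ≤ lap V (tauV V c) ∧
      ∀ s > (0 : ℝ),
        lap V (tauV V c + s) ≤ c + (tauV V c + s) / (s * Real.exp (s * lamV V c)) := by
  set lam := lamV V c with hlamdef
  set τ := tauV V c with hτdef
  set S : Set ℝ := {l : ℝ | 0 < l ∧ c < cdfV V l} with hSdef
  have cdf_nonneg : ∀ l, 0 ≤ cdfV V l := fun l => ENNReal.toReal_nonneg
  have cdf_mono : ∀ ⦃a b : ℝ⦄, a ≤ b → cdfV V a ≤ cdfV V b := fun a b h =>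
    ENNReal.toReal_mono (measure_ne_top V _) (measure_mono (Ioc_subset_Ioc_right h))
  have hlap0 : lap V 0 = (V (Ioi 0)).toReal := by
    simp [lap, measureReal_def]
  -- S nonempty
  have hSne : S.Nonempty := by
    have h1 : ENNReal.ofReal c < V (Ioi 0) := by
      rw [ENNReal.ofReal_lt_iff_lt_toReal hc.le (measure_ne_top V _)]
      rwa [hlap0] at hclt
    have hmono : Monotone (fun n : ℕ => Ioc (0:ℝ) n) := fun m n h =>
      Ioc_subset_Ioc_right (by exact_mod_cast h)
    have hU : ⋃ n : ℕ, Ioc (0:ℝ) n = Ioi 0 := by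
      ext x
      simp only [mem_iUnion, mem_Ioc, mem_Ioi]
      constructor
      · rintro ⟨n, h, _⟩; exact h
      · intro hx
        obtain ⟨n, hn⟩ := exists_nat_ge x
        exact ⟨n, hx, hn⟩
    rw [← hU, hmono.measure_iUnion] at h1
    obtain ⟨n, hn⟩ := lt_iSup_iff.mp h1
    refine ⟨(n:ℝ) + 1, by positivity, ?_⟩
    have h2 : ENNReal.ofReal c < V (Ioc 0 ((n:ℝ)+1)) :=
      lt_of_lt_of_le hn (measure_mono (Ioc_subset_Ioc_right (by linarith)))
    exact (ENNReal.ofReal_lt_iff_lt_toReal hc.le (measure_ne_top V _)).mp h2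
  -- small cdf near zero
  have hδ : ∃ δ : ℝ, 0 < δ ∧ cdfV V δ < c := by
    have hanti : Antitone (fun n : ℕ => Ioc (0:ℝ) (1/(n+1))) := by
      intro m n h
      apply Ioc_subset_Ioc_right
      gcongr <;> exact_mod_cast h
    have hI : ⋂ n : ℕ, Ioc (0:ℝ) (1/(n+1)) = ∅ := by
      ext x
      simp only [mem_iInter, mem_Ioc, mem_empty_iff_false, iff_false, not_forall]
      by_cases hx : 0 < x
      · obtain ⟨n, hn⟩ := exists_nat_gt (1/x)
        refine ⟨n, fun h => ?_⟩
        have h1 : 1/x < (n:ℝ) + 1 := by linarith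
        have h2 : 1/((n:ℝ)+1) < x := by
          rw [div_lt_iff₀ (by positivity)]
          rw [div_lt_iff₀ hx] at h1
          nlinarith
        linarith [h.2]
      · exact ⟨0, fun h => hx h.1⟩
    have := hanti.measure_iInter (fun n => (measurableSet_Ioc).nullMeasurableSet)
      ⟨0, measure_ne_top V _⟩
    rw [hI, measure_empty] at this
    have h0 : ⨅ n : ℕ, V (Ioc (0:ℝ) (1/(n+1))) < ENNReal.ofReal c := by
      rw [← this]
      exact ENNReal.ofReal_pos.mpr hc
    obtain ⟨n, hn⟩ := iInf_lt_iff.mp h0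
    refine ⟨1/((n:ℝ)+1), by positivity, ?_⟩
    have := ENNReal.toReal_lt_of_lt_ofReal hn
    exact this
  obtain ⟨δ, hδpos, hδlt⟩ := hδ
  have hlb : ∀ l ∈ S, δ ≤ l := by
    intro l hl
    by_contra h
    push_neg at h
    exact absurd (lt_of_le_of_lt (cdf_mono h.le) hδlt) (not_lt.mpr hl.2.le)
  have hbddS : BddBelow S := ⟨δ, hlb⟩
  have hlam_pos : 0 < lam := lt_of_lt_of_le hδpos (le_csInf hSne hlb)
  have hlam_le : ∀ l ∈ S, lam ≤ l := fun l hl => csInf_le hbddS hl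
  have hcdf_lt_lam : ∀ l, l < lam → cdfV V l ≤ c := by
    intro l hl
    by_contra h
    push_neg at h
    rcases le_or_gt l 0 with h0 | h0
    · have hmm : cdfV V l ≤ cdfV V δ := cdf_mono (h0.trans hδpos.le)
      linarith
    · exact absurd (hlam_le l ⟨h0, h⟩) (not_le.mpr hl)
  -- tau facts
  have hbddτ : BddAbove ((fun l => Real.log (1 + cdfV V l) / l) '' Ici lam) := by
    refine ⟨Real.log (1 + (V univ).toReal) / lam, ?_⟩
    rintro _ ⟨l, hl, rfl⟩
    have hllam : lam ≤ l := hl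
    have hlpos : 0 < l := lt_of_lt_of_le hlam_pos hllam
    have hcle : cdfV V l ≤ (V univ).toReal :=
      ENNReal.toReal_mono (measure_ne_top V _) (measure_mono (subset_univ _))
    have h1 : 0 ≤ Real.log (1 + cdfV V l) :=
      Real.log_nonneg (by linarith [cdf_nonneg l])
    have h2 : Real.log (1 + cdfV V l) ≤ Real.log (1 + (V univ).toReal) :=
      Real.log_le_log (by linarith [cdf_nonneg l]) (by linarith)
    calc Real.log (1 + cdfV V l) / l ≤ Real.log (1 + cdfV V l) / lam := by
          gcongr
      _ ≤ Real.log (1 + (V univ).toReal) / lam := by gcongr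
  have hτ_ge : ∀ l, lam ≤ l → Real.log (1 + cdfV V l) / l ≤ τ := fun l hl =>
    le_csSup hbddτ ⟨l, hl, rfl⟩
  have hτ_nonneg : 0 ≤ τ := by
    refine le_trans ?_ (hτ_ge lam le_rfl)
    have := cdf_nonneg lam
    have hlog : 0 ≤ Real.log (1 + cdfV V lam) := Real.log_nonneg (by linarith)
    positivity
  have hcdf_exp : ∀ u, lam ≤ u → cdfV V u ≤ Real.exp (τ * u) - 1 := by
    intro u hu
    have h := hτ_ge u hu
    have hupos : 0 < u := lt_of_lt_of_le hlam_pos hu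
    rw [div_le_iff₀ hupos] at h
    have hlog := (Real.log_le_iff_le_exp
      (show (0:ℝ) < 1 + cdfV V u by linarith [cdf_nonneg u])).mp h
    linarith
  -- integrability
  have hae : ∀ᵐ x ∂V, 0 < x := by
    rw [ae_iff]
    convert hsupp using 2
    ext x
    simp [not_lt]
  have hInt : ∀ t : ℝ, 0 ≤ t → Integrable (fun x => Real.exp (-t * x)) V := by
    intro t ht
    refine Integrable.mono' (integrable_const 1)
      ((Real.continuous_exp.comp (continuous_const.mul continuous_id)).aestronglyMeasurable) ?_
    filter_upwards [hae] with x hx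
    rw [Real.norm_eq_abs, Real.abs_exp]
    exact Real.exp_le_one_iff.mpr (by nlinarith)
  have hτ_pos : 0 < τ := by
    obtain ⟨l, hl0, hcl⟩ := hSne
    refine lt_of_lt_of_le ?_ (hτ_ge l (hlam_le l ⟨hl0, hcl⟩))
    have hlg : 0 < Real.log (1 + cdfV V l) := Real.log_pos (by linarith)
    positivity
  have hcdf_gt : ∀ l, lam < l → c ≤ cdfV V l := by
    intro l hl
    obtain ⟨m, hmS, hml⟩ := (csInf_lt_iff hbddS hSne).mp hl
    exact le_trans hmS.2.le (cdf_mono hml.le)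
  have hcdf_ge : ∀ l, lam ≤ l → c ≤ cdfV V l := by
    intro l hl
    rcases eq_or_lt_of_le hl with heq | hlt
    · rw [← heq]
      have hanti : Antitone (fun n : ℕ => Ioc (0:ℝ) (lam + 1/(n+1))) := by
        intro m n h
        apply Ioc_subset_Ioc_right
        have : (1:ℝ)/((n:ℝ)+1) ≤ 1/((m:ℝ)+1) := by gcongr <;> exact_mod_cast h
        linarith
      have hIeq : ⋂ n : ℕ, Ioc (0:ℝ) (lam + 1/(n+1)) = Ioc 0 lam := by
        ext x
        simp only [mem_iInter, mem_Ioc]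
        constructor
        · intro h
          refine ⟨(h 0).1, ?_⟩
          by_contra hx
          push_neg at hx
          obtain ⟨n, hn⟩ := exists_nat_gt (1/(x - lam))
          have hxl : 0 < x - lam := by linarith
          have h2 : 1/((n:ℝ)+1) < x - lam := by
            rw [div_lt_iff₀ (by positivity)]
            rw [div_lt_iff₀ hxl] at hn
            nlinarith
          linarith [(h n).2]
        · rintro ⟨h1, h2⟩ n
          have : (0:ℝ) < 1/((n:ℝ)+1) := by positivity
          exact ⟨h1, by linarith⟩
      have hcle : ENNReal.ofReal c ≤ V (Ioc 0 lam) := by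
        rw [← hIeq, hanti.measure_iInter (fun n => measurableSet_Ioc.nullMeasurableSet)
          ⟨0, measure_ne_top V _⟩]
        refine le_iInf fun n => ?_
        have hpos : (0:ℝ) < 1/((n:ℝ)+1) := by positivity
        exact ENNReal.ofReal_le_of_le_toReal (hcdf_gt (lam + 1/(n+1)) (by linarith))
      have := ENNReal.toReal_mono (measure_ne_top V _) hcle
      rwa [ENNReal.toReal_ofReal hc.le] at this
    · exact hcdf_gt l hlt
  have hlower : ∀ l, 0 < l → Real.exp (-(τ * l)) * cdfV V l ≤ lap V τ := by
    intro l hl0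
    calc Real.exp (-(τ * l)) * cdfV V l = ∫ _ in Ioc 0 l, Real.exp (-(τ * l)) ∂V := by
          rw [setIntegral_const, smul_eq_mul, cdfV, mul_comm, measureReal_def]
      _ ≤ ∫ x in Ioc 0 l, Real.exp (-τ * x) ∂V := by
          refine setIntegral_mono_on ((integrable_const _).integrableOn)
            ((hInt τ hτ_nonneg).integrableOn) measurableSet_Ioc ?_
          intro x hx
          apply Real.exp_le_exp.mpr
          rw [neg_mul]
          exact neg_le_neg (mul_le_mul_of_nonneg_left hx.2 hτ_nonneg)
      _ ≤ ∫ x in Ioi 0, Real.exp (-τ * x) ∂V :=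
          setIntegral_mono_set ((hInt τ hτ_nonneg).integrableOn)
            (Filter.Eventually.of_forall fun x => (Real.exp_pos _).le)
            (HasSubset.Subset.eventuallyLE Ioc_subset_Ioi_self)
      _ = lap V τ := rfl
  constructor
  · -- claim 1
    set M := (V univ).toReal with hM
    have hM0 : 0 ≤ M := ENNReal.toReal_nonneg
    set q : ℝ := 1 + M with hq
    have hq1 : (1:ℝ) ≤ q := by linarith
    have hsup : τ = sSup ((fun l => Real.log (1 + cdfV V l) / l) '' Ici lam) := rfl
    have hbound : ∀ n : ℕ,
        c/(1+c) * Real.exp (-(1/((n:ℝ)+1)) * Real.log q) ≤ lap V τ := by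
      intro n
      set ε : ℝ := 1/((n:ℝ)+2) with hε
      have hε0 : 0 < ε := by positivity
      have hε1 : ε < 1 := by
        rw [hε, div_lt_one (by positivity)]
        linarith
      have h1ε : 0 < 1 - ε := by linarith
      have hlt : (1-ε) * τ < τ := by nlinarith
      rw [hsup] at hlt
      have hne2 : ((fun l => Real.log (1 + cdfV V l) / l) '' Ici lam).Nonempty :=
        ⟨_, ⟨lam, Set.mem_Ici.mpr le_rfl, rfl⟩⟩
      obtain ⟨y, hymem, hy0⟩ := exists_lt_of_lt_csSup hne2 hlt
      obtain ⟨l, hlmem, rfl⟩ := hymem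
      have hy : (1-ε) * τ < Real.log (1 + cdfV V l) / l := by rw [hsup]; exact hy0
      have hl0 : 0 < l := lt_of_lt_of_le hlam_pos hlmem
      set d := cdfV V l with hd
      have hdc : c ≤ d := hcdf_ge l hlmem
      have hd0 : 0 ≤ d := cdf_nonneg l
      have h1d : (0:ℝ) < 1 + d := by linarith
      have hdM : d ≤ M := ENNReal.toReal_mono (measure_ne_top V _) (measure_mono (subset_univ _))
      have hlog_nonneg : 0 ≤ Real.log (1+d) := Real.log_nonneg (by linarith)
      have hlogq : Real.log (1+d) ≤ Real.log q :=
        Real.log_le_log h1d (by linarith)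
      have hτl : τ * l ≤ Real.log (1+d) / (1-ε) := by
        rw [lt_div_iff₀ hl0] at hy
        rw [le_div_iff₀ h1ε]
        nlinarith
      have hfrac : 1/(1-ε) = 1 + 1/((n:ℝ)+1) := by
        have h2 : ((n:ℝ)+2) ≠ 0 := by positivity
        have h3 : ((n:ℝ)+1) ≠ 0 := by positivity
        have h4 : (1+(n:ℝ)) ≠ 0 := by positivity
        have h1 : (1:ℝ) - ε = ((n:ℝ)+1)/((n:ℝ)+2) := by
          rw [hε]
          field_simp
          ring
        rw [h1, one_div_div]
        field_simp
        ring
      have hsplit2 : Real.exp (-(Real.log (1+d))/(1-ε)) * d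
          = d/(1+d) * Real.exp (-(1/((n:ℝ)+1)) * Real.log (1+d)) := by
        have hfe : -(Real.log (1+d))/(1-ε)
            = -Real.log (1+d) + (-(1/((n:ℝ)+1)) * Real.log (1+d)) := by
          rw [div_eq_mul_one_div, hfrac]
          ring
        rw [hfe, Real.exp_add, Real.exp_neg, Real.exp_log h1d]
        ring
      calc c/(1+c) * Real.exp (-(1/((n:ℝ)+1)) * Real.log q)
          ≤ d/(1+d) * Real.exp (-(1/((n:ℝ)+1)) * Real.log (1+d)) := by
            have hcd : c/(1+c) ≤ d/(1+d) := by
              rw [div_le_div_iff₀ (by linarith) h1d]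
              nlinarith
            have hee : Real.exp (-(1/((n:ℝ)+1)) * Real.log q)
                ≤ Real.exp (-(1/((n:ℝ)+1)) * Real.log (1+d)) := by
              apply Real.exp_le_exp.mpr
              have hpos : (0:ℝ) < 1/((n:ℝ)+1) := by positivity
              nlinarith
            have hcc : 0 ≤ c/(1+c) := by positivity
            exact mul_le_mul hcd hee (Real.exp_pos _).le (by positivity)
        _ = Real.exp (-(Real.log (1+d))/(1-ε)) * d := hsplit2.symm
        _ ≤ Real.exp (-(τ * l)) * d := by
            apply mul_le_mul_of_nonneg_right _ hd0
            apply Real.exp_le_exp.mpr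
            rw [neg_div]
            linarith
        _ ≤ lap V τ := hlower l hl0
    have htends : Tendsto
        (fun n : ℕ => c/(1+c) * Real.exp (-(1/((n:ℝ)+1)) * Real.log q))
        atTop (𝓝 (c/(1+c))) := by
      have h1 : Tendsto (fun n : ℕ => -(1/((n:ℝ)+1)) * Real.log q) atTop (𝓝 0) := by
        have h2 := tendsto_one_div_add_atTop_nhds_zero_nat (𝕜 := ℝ)
        have := (h2.neg).mul_const (Real.log q)
        simpa using this
      have h2 := (Real.continuous_exp.tendsto 0).comp h1
      have h3 := h2.const_mul (c/(1+c))
      simpa using h3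
    exact le_of_tendsto htends (Filter.Eventually.of_forall hbound)
  · -- claim 2
    intro s hs
    set t := τ + s with htdef
    have htpos : 0 < t := by positivity
    have hint1 : IntegrableOn (fun x => Real.exp (-t * x)) (Ioo 0 lam) V :=
      (hInt t htpos.le).integrableOn
    have hint2 : IntegrableOn (fun x => Real.exp (-t * x)) (Ici lam) V :=
      (hInt t htpos.le).integrableOn
    have hun : Ioo (0:ℝ) lam ∪ Ici lam = Ioi 0 := by
      ext x
      simp only [mem_union, mem_Ioo, mem_Ici, mem_Ioi]
      constructor
      · rintro (⟨h1, _⟩ | h2)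
        · exact h1
        · exact lt_of_lt_of_le hlam_pos h2
      · intro hx
        rcases lt_or_ge x lam with h | h
        · exact Or.inl ⟨hx, h⟩
        · exact Or.inr h
    have hdisj : Disjoint (Ioo (0:ℝ) lam) (Ici lam) :=
      (Set.Iio_disjoint_Ici le_rfl).mono_left Ioo_subset_Iio_self
    have hsplit : lap V t
        = (∫ x in Ioo 0 lam, Real.exp (-t * x) ∂V) + ∫ x in Ici lam, Real.exp (-t * x) ∂V := by
      rw [show lap V t = ∫ x in Ioi 0, Real.exp (-t * x) ∂V from rfl, ← hun,
        setIntegral_union hdisj measurableSet_Ici hint1 hint2]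
    -- part A
    have hmA : V (Ioo 0 lam) ≤ ENNReal.ofReal c := by
      have hmono2 : Monotone (fun n : ℕ => Ioc (0:ℝ) (lam - lam/(n+1))) := by
        intro m n h
        apply Ioc_subset_Ioc_right
        have : lam/((n:ℝ)+1) ≤ lam/((m:ℝ)+1) := by
          gcongr <;> exact_mod_cast h
        linarith
      have hU2 : ⋃ n : ℕ, Ioc (0:ℝ) (lam - lam/(n+1)) = Ioo 0 lam := by
        ext x
        simp only [mem_iUnion, mem_Ioc, mem_Ioo]
        constructor
        · rintro ⟨n, h1, h2⟩
          refine ⟨h1, lt_of_le_of_lt h2 ?_⟩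
          have : 0 < lam/((n:ℝ)+1) := by positivity
          linarith
        · rintro ⟨h1, h2⟩
          obtain ⟨n, hn⟩ := exists_nat_ge (lam/(lam - x))
          have hlx : 0 < lam - x := by linarith
          have h3 : lam ≤ (lam - x) * ((n:ℝ)+1) := by
            rw [div_le_iff₀ hlx] at hn
            nlinarith
          refine ⟨n, h1, ?_⟩
          have h4 : lam/((n:ℝ)+1) ≤ lam - x := by
            rw [div_le_iff₀ (by positivity)]
            linarith
          linarith
      rw [← hU2, hmono2.measure_iUnion]
      apply iSup_le
      intro n
      have hlt : lam - lam/((n:ℝ)+1) < lam := by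
        have : 0 < lam/((n:ℝ)+1) := by positivity
        linarith
      exact (ENNReal.le_ofReal_iff_toReal_le (measure_ne_top V _) hc.le).mpr
        (hcdf_lt_lam _ hlt)
    have hA : ∫ x in Ioo 0 lam, Real.exp (-t * x) ∂V ≤ c := by
      calc ∫ x in Ioo 0 lam, Real.exp (-t * x) ∂V ≤ ∫ _ in Ioo 0 lam, (1:ℝ) ∂V := by
            refine setIntegral_mono_on hint1 ((integrable_const _).integrableOn)
              measurableSet_Ioo ?_
            intro x hx
            exact Real.exp_le_one_iff.mpr (by nlinarith [hx.1])
        _ = (V (Ioo 0 lam)).toReal := by rw [setIntegral_const, smul_eq_mul, mul_one, measureReal_def]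
        _ ≤ c := ENNReal.toReal_le_of_le_ofReal hc.le hmA
    -- part B
    have hB := tail_bound V hlam_pos hs hτ_nonneg
      (fun u hu => hcdf_exp u hu.le)
      (by simpa [htdef] using hint2)
    have hrhs : t * Real.exp (-s * lam) / s = t / (s * Real.exp (s * lam)) := by
      rw [show (-s) * lam = -(s * lam) by ring, Real.exp_neg]
      field_simp
    calc lap V t ≤ c + ∫ x in Ici lam, Real.exp (-t * x) ∂V := by
          rw [hsplit]; linarith
      _ ≤ c + t * Real.exp (-s * lam) / s := by
          have : ∫ x in Ici lam, Real.exp (-t * x) ∂V ≤ t * Real.exp (-s * lam) / s := by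
            simpa [htdef] using hB
          linarith
      _ = c + t / (s * Real.exp (s * lam)) := by rw [hrhs]
end

section
/- Let V be a finite Borel measure on (0,∞). Then for every δ with 0 < δ < min(𝓛_V(0), 1)/2 one has τ_V(2δ) ≤ T_V(δ) ≤ (6/δ²)·τ_V(δ/2). -/
open MeasureTheory Filter Set Topology

section Aux
variable (V : Measure ℝ) [IsFiniteMeasure V]

lemma cdf_nonneg (l : ℝ) : 0 ≤ cdfV V l := ENNReal.toReal_nonneg

lemma cdf_mono : Monotone (cdfV V) := fun a b hab =>
  ENNReal.toReal_mono (measure_ne_top V _) (measure_mono (Ioc_subset_Ioc_right hab))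

lemma cdf_le_tot (l : ℝ) : cdfV V l ≤ (V (Ioi 0)).toReal :=
  ENNReal.toReal_mono (measure_ne_top V _) (measure_mono Ioc_subset_Ioi_self)

lemma integrableOn_exp {t : ℝ} (ht : 0 ≤ t) {s : Set ℝ} (hs : s ⊆ Ioi 0)
    (hms : MeasurableSet s) : IntegrableOn (fun x => Real.exp (-t * x)) s V := by
  refine Integrable.mono' (integrable_const 1) ?_ ?_
  · exact (Real.continuous_exp.comp (continuous_const.mul continuous_id)).aestronglyMeasurable
  · filter_upwards [ae_restrict_mem hms] with x hx
    rw [Real.norm_eq_abs, abs_of_pos (Real.exp_pos _), Real.exp_le_one_iff]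
    have : (0:ℝ) < x := hs hx
    nlinarith

lemma lap_zero_eq : lap V 0 = (V (Ioi 0)).toReal := by
  simp [lap, MeasureTheory.setIntegral_const, measureReal_def]

lemma exists_cdf_gt {c : ℝ} (hc0 : 0 ≤ c) (hc : c < (V (Ioi 0)).toReal) : ∃ l, 0 < l ∧ c < cdfV V l := by
  have hU : ⋃ n : ℕ, Ioc (0:ℝ) (n+1) = Ioi 0 := by
    ext x
    simp only [mem_iUnion, mem_Ioc, mem_Ioi]
    constructor
    · rintro ⟨n, h1, _⟩; exact h1
    · intro hx
      obtain ⟨n, hn⟩ := exists_nat_ge x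
      exact ⟨n, hx, by linarith⟩
  have hmono : Monotone (fun n : ℕ => Ioc (0:ℝ) (n+1)) := fun a b hab =>
    Ioc_subset_Ioc_right (by exact_mod_cast Nat.add_le_add_right hab 1)
  have hsup : V (Ioi 0) = ⨆ n : ℕ, V (Ioc (0:ℝ) (n+1)) := by
    rw [← hU]; exact hmono.directed_le.measure_iUnion
  by_contra h
  push_neg at h
  have : (V (Ioi 0)).toReal ≤ c := by
    rw [hsup]
    have hle : (⨆ n : ℕ, V (Ioc (0:ℝ) (n+1))) ≤ ENNReal.ofReal c := by
      refine iSup_le fun n => ?_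
      rcases le_or_gt ((n:ℝ)+1) 0 with h0 | h0
      · simp [Ioc_eq_empty_of_le h0]
      · have := h _ h0
        exact ENNReal.le_ofReal_iff_toReal_le (measure_ne_top V _)
          (le_trans (cdf_nonneg V _) this) |>.2 this
    calc (⨆ n : ℕ, V (Ioc (0:ℝ) (n+1))).toReal ≤ (ENNReal.ofReal c).toReal :=
          ENNReal.toReal_mono ENNReal.ofReal_ne_top hle
      _ = c := ENNReal.toReal_ofReal hc0
  linarith


variable {V}

lemma lam_set_nonempty {c : ℝ} (hc0 : 0 ≤ c) (hc : c < (V (Ioi 0)).toReal) :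
    {l : ℝ | 0 < l ∧ c < cdfV V l}.Nonempty := exists_cdf_gt V hc0 hc

lemma lam_pos {c : ℝ} (hc0 : 0 < c) (hc : c < (V (Ioi 0)).toReal) : 0 < lamV V c := by
  -- find l0 > 0 with V (Ioc 0 l0) < ofReal c
  have hinter : ⋂ n : ℕ, Ioc (0:ℝ) (1/(n+1)) = ∅ := by
    ext x
    simp only [mem_iInter, mem_Ioc, mem_empty_iff_false, iff_false, not_forall]
    by_cases hx : 0 < x
    · obtain ⟨n, hn⟩ := exists_nat_gt (1/x)
      refine ⟨n, fun h => ?_⟩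
      have h1 : (0:ℝ) < (n:ℝ)+1 := by positivity
      have : 1/x < (n:ℝ)+1 := by linarith
      have : 1/((n:ℝ)+1) < x := by
        rw [div_lt_iff₀ h1]
        rw [div_lt_iff₀ hx] at this
        nlinarith
      linarith [h.2]
    · exact ⟨0, fun h => hx h.1⟩
  have hanti : Antitone (fun n : ℕ => Ioc (0:ℝ) (1/(n+1))) := by
    intro a b hab
    apply Ioc_subset_Ioc_right
    apply one_div_le_one_div_of_le (by positivity)
    exact_mod_cast Nat.add_le_add_right hab 1
  have htend : Tendsto (fun n : ℕ => V (Ioc (0:ℝ) (1/(n+1)))) atTop (𝓝 0) := by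
    have := tendsto_measure_iInter_atTop
      (fun n : ℕ => (measurableSet_Ioc : MeasurableSet (Ioc (0:ℝ) (1/(n+1)))).nullMeasurableSet)
      hanti ⟨0, measure_ne_top V _⟩
    rw [hinter] at this
    simpa [Function.comp_def] using this
  have hev := htend.eventually_lt_const (show (0:ENNReal) < ENNReal.ofReal c by
    simpa using hc0)
  obtain ⟨n, hn⟩ := hev.exists
  have hlb : ∀ l ∈ {l : ℝ | 0 < l ∧ c < cdfV V l}, 1/((n:ℝ)+1) ≤ l := by
    rintro l ⟨hl0, hlc⟩
    by_contra hcon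
    push_neg at hcon
    have ha : cdfV V l ≤ (V (Ioc (0:ℝ) (1/(n+1)))).toReal :=
      ENNReal.toReal_mono (measure_ne_top V _) (measure_mono (Ioc_subset_Ioc_right hcon.le))
    have hb : (V (Ioc (0:ℝ) (1/(n+1)))).toReal < c := by
      have := (ENNReal.toReal_lt_toReal (measure_ne_top V _) ENNReal.ofReal_ne_top).2 hn
      rwa [ENNReal.toReal_ofReal hc0.le] at this
    linarith
  have h1 : (1:ℝ)/((n:ℝ)+1) ≤ lamV V c := le_csInf (lam_set_nonempty hc0.le hc) hlb
  have h2 : (0:ℝ) < 1/((n:ℝ)+1) := by positivity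
  linarith

lemma cdf_ge_of_lam_le {c : ℝ} (hc0 : 0 ≤ c) (hc : c < (V (Ioi 0)).toReal)
    {l : ℝ} (hl : lamV V c ≤ l) : c ≤ cdfV V l := by
  have hne := lam_set_nonempty (V := V) hc0 hc
  rcases eq_or_lt_of_le hl with rfl | hlt
  · -- right continuity
    set lam := lamV V c with hlam
    have key : ∀ n : ℕ, ENNReal.ofReal c ≤ V (Ioc 0 (lam + 1/(n+1))) := by
      intro n
      have hgt : lam < lam + 1/(n+1) := by
        have : (0:ℝ) < 1/((n:ℝ)+1) := by positivity
        linarith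
      obtain ⟨l', hl', hl'lt⟩ := exists_lt_of_csInf_lt hne hgt
      have : c ≤ cdfV V (lam + 1/(n+1)) := le_trans hl'.2.le (cdf_mono V hl'lt.le)
      exact ENNReal.ofReal_le_of_le_toReal this
    have hinter : ⋂ n : ℕ, Ioc (0:ℝ) (lam + 1/(n+1)) = Ioc 0 lam := by
      ext x
      simp only [mem_iInter, mem_Ioc]
      constructor
      · rintro h
        refine ⟨(h 0).1, ?_⟩
        by_contra hcon
        push_neg at hcon
        obtain ⟨n, hn⟩ := exists_nat_gt (1/(x - lam))
        have hxl : 0 < x - lam := by linarith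
        have h1 : (0:ℝ) < (n:ℝ)+1 := by positivity
        have : 1/(x-lam) < (n:ℝ)+1 := by linarith
        have : 1/((n:ℝ)+1) < x - lam := by
          rw [div_lt_iff₀ h1]
          rw [div_lt_iff₀ hxl] at this
          nlinarith
        linarith [(h n).2]
      · rintro ⟨h1, h2⟩ n
        have : (0:ℝ) < 1/((n:ℝ)+1) := by positivity
        exact ⟨h1, by linarith⟩
    have hanti : Antitone (fun n : ℕ => Ioc (0:ℝ) (lam + 1/(n+1))) := by
      intro a b hab
      apply Ioc_subset_Ioc_right
      have : (1:ℝ)/((b:ℝ)+1) ≤ 1/((a:ℝ)+1) := by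
        apply one_div_le_one_div_of_le (by positivity)
        exact_mod_cast Nat.add_le_add_right hab 1
      linarith
    have htend : Tendsto (fun n : ℕ => V (Ioc (0:ℝ) (lam + 1/(n+1)))) atTop
        (𝓝 (V (Ioc 0 lam))) := by
      have := tendsto_measure_iInter_atTop
        (fun n : ℕ => (measurableSet_Ioc :
          MeasurableSet (Ioc (0:ℝ) (lam + 1/(n+1)))).nullMeasurableSet)
        hanti ⟨0, measure_ne_top V _⟩
      rw [hinter] at this
      exact this
    have : ENNReal.ofReal c ≤ V (Ioc 0 lam) := ge_of_tendsto htend (Eventually.of_forall key)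
    calc c = (ENNReal.ofReal c).toReal := (ENNReal.toReal_ofReal hc0).symm
      _ ≤ (V (Ioc 0 lam)).toReal := ENNReal.toReal_mono (measure_ne_top V _) this
  · obtain ⟨l', hl', hl'lt⟩ := exists_lt_of_csInf_lt hne hlt
    exact le_trans hl'.2.le (cdf_mono V hl'lt.le)

lemma cdf_le_of_lt_lam {c : ℝ} (hc0 : 0 < c) {l : ℝ} (hl : l < lamV V c) :
    cdfV V l ≤ c := by
  by_contra hcon
  push_neg at hcon
  rcases le_or_gt l 0 with h0 | h0
  · rw [cdfV, Ioc_eq_empty_of_le h0] at hcon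
    simp at hcon
    linarith
  · have : lamV V c ≤ l := csInf_le ⟨0, fun x hx => hx.1.le⟩ ⟨h0, hcon⟩
    linarith


lemma tau_bddAbove {c : ℝ} (hlam : 0 < lamV V c) :
    BddAbove ((fun l => Real.log (1 + cdfV V l) / l) '' Ici (lamV V c)) := by
  refine ⟨Real.log (1 + (V (Ioi 0)).toReal) / lamV V c, ?_⟩
  rintro y ⟨l, hl, rfl⟩
  have hl' : lamV V c ≤ l := hl
  refine div_le_div₀ (Real.log_nonneg (by linarith [ENNReal.toReal_nonneg (a := V (Ioi 0))]))
    (Real.log_le_log (by linarith [cdf_nonneg V l]) (by linarith [cdf_le_tot V l])) hlam hl'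

lemma le_tau {c : ℝ} (hlam : 0 < lamV V c) {l : ℝ} (hl : lamV V c ≤ l) :
    Real.log (1 + cdfV V l) / l ≤ tauV V c :=
  le_csSup (tau_bddAbove hlam) ⟨l, hl, rfl⟩

lemma log_lb {x : ℝ} (hx : 0 ≤ x) : x / (1 + x) ≤ Real.log (1 + x) := by
  have h1 : (0:ℝ) < 1 + x := by linarith
  have := Real.log_le_sub_one_of_pos (show (0:ℝ) < (1+x)⁻¹ by positivity)
  rw [Real.log_inv] at this
  have h2 : 1 - (1+x)⁻¹ ≤ Real.log (1+x) := by linarith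
  have h3 : x / (1+x) = 1 - (1+x)⁻¹ := by field_simp; ring
  linarith [h2, h3.le, h3.ge]

lemma tau_pos {c : ℝ} (hc0 : 0 < c) (hc : c < (V (Ioi 0)).toReal) : 0 < tauV V c := by
  have hlam := lam_pos (V := V) hc0 hc
  have h1 : Real.log (1 + cdfV V (lamV V c)) / lamV V c ≤ tauV V c := le_tau hlam le_rfl
  have h2 : c ≤ cdfV V (lamV V c) := cdf_ge_of_lam_le hc0.le hc le_rfl
  have h3 : 0 < Real.log (1 + cdfV V (lamV V c)) := by
    apply Real.log_pos; linarith
  have := div_pos h3 hlam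
  linarith

lemma tau_lam_ge {c : ℝ} (hc0 : 0 < c) (hc : c < (V (Ioi 0)).toReal) :
    Real.log (1 + c) ≤ tauV V c * lamV V c := by
  have hlam := lam_pos (V := V) hc0 hc
  have h1 : Real.log (1 + cdfV V (lamV V c)) / lamV V c ≤ tauV V c := le_tau hlam le_rfl
  have h2 : c ≤ cdfV V (lamV V c) := cdf_ge_of_lam_le hc0.le hc le_rfl
  have h3 : Real.log (1 + c) ≤ Real.log (1 + cdfV V (lamV V c)) :=
    Real.log_le_log (by linarith) (by linarith)
  rw [div_le_iff₀ hlam] at h1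
  linarith

lemma cdf_le_exp {c : ℝ} (hlam : 0 < lamV V c) {l : ℝ} (hl : lamV V c ≤ l) :
    1 + cdfV V l ≤ Real.exp (tauV V c * l) := by
  have h1 := le_tau hlam hl
  have hl0 : 0 < l := lt_of_lt_of_le hlam hl
  rw [div_le_iff₀ hl0] at h1
  calc 1 + cdfV V l = Real.exp (Real.log (1 + cdfV V l)) :=
        (Real.exp_log (by linarith [cdf_nonneg V l])).symm
    _ ≤ Real.exp (tauV V c * l) := Real.exp_le_exp.2 h1

lemma measure_Ioo_lam_le {c : ℝ} (hc0 : 0 < c) :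
    V (Ioo 0 (lamV V c)) ≤ ENNReal.ofReal c := by
  set lam := lamV V c with hlam
  rcases le_or_gt lam 0 with h0 | h0
  · simp [Ioo_eq_empty_of_le (le_trans h0 (le_refl _))]
  have hU : ⋃ n : ℕ, Ioc (0:ℝ) (lam - lam/(n+1)) = Ioo 0 lam := by
    ext x
    simp only [mem_iUnion, mem_Ioc, mem_Ioo]
    constructor
    · rintro ⟨n, h1, h2⟩
      have : (0:ℝ) < lam/((n:ℝ)+1) := by positivity
      exact ⟨h1, by linarith⟩
    · rintro ⟨h1, h2⟩
      obtain ⟨n, hn⟩ := exists_nat_gt (lam/(lam - x))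
      have hxl : 0 < lam - x := by linarith
      have hn1 : (0:ℝ) < (n:ℝ)+1 := by positivity
      refine ⟨n, h1, ?_⟩
      have : lam/(lam-x) < (n:ℝ)+1 := by linarith
      have : lam/((n:ℝ)+1) < lam - x := by
        rw [div_lt_iff₀ hn1]
        rw [div_lt_iff₀ hxl] at this
        nlinarith
      linarith
  have hmono : Monotone (fun n : ℕ => Ioc (0:ℝ) (lam - lam/(n+1))) := by
    intro a b hab
    apply Ioc_subset_Ioc_right
    have : lam/((b:ℝ)+1) ≤ lam/((a:ℝ)+1) := by
      apply div_le_div_of_nonneg_left h0.le (by positivity)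
      exact_mod_cast Nat.add_le_add_right hab 1
    linarith
  rw [← hU, hmono.directed_le.measure_iUnion]
  refine iSup_le fun n => ?_
  have hlt : lam - lam/((n:ℝ)+1) < lam := by
    have : (0:ℝ) < lam/((n:ℝ)+1) := by positivity
    linarith
  have := cdf_le_of_lt_lam (V := V) hc0 (by rw [← hlam]; exact hlt)
  exact ENNReal.le_ofReal_iff_toReal_le (measure_ne_top V _) hc0.le |>.2 this


set_option maxHeartbeats 1000000 in
lemma lap_t0_le {δ : ℝ} (hδ : 0 < δ) (hδ2 : δ ≤ 1/2) (htot : δ/2 < (V (Ioi 0)).toReal) :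
    lap V (6/δ^2 * tauV V (δ/2)) ≤ δ := by
  have hc20 : 0 < δ/2 := by positivity
  have hlam : 0 < lamV V (δ/2) := lam_pos hc20 htot
  set lam := lamV V (δ/2) with hlamdef
  set τ := tauV V (δ/2) with hτdef
  have hτ : 0 < τ := tau_pos hc20 htot
  set t₀ := 6/δ^2 * τ with ht₀def
  have ht₀ : 0 < t₀ := by positivity
  have hτt₀ : τ / t₀ = δ^2/6 := by
    rw [ht₀def]; field_simp
  set a : ℝ := δ^2/6 with hadef
  have ha0 : 0 < a := by positivity
  have ha1 : a < 1 := by rw [hadef]; nlinarith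
  have hta : t₀ * a = τ := by
    rw [ht₀def, hadef]; field_simp
  -- splitting of the integral
  have hsub1 : Ioo (0:ℝ) lam ⊆ Ioi 0 := Ioo_subset_Ioi_self
  have hsub2 : Ici lam ⊆ Ioi (0:ℝ) := fun x hx => lt_of_lt_of_le hlam hx
  have hint1 : IntegrableOn (fun x => Real.exp (-t₀ * x)) (Ioo 0 lam) V :=
    integrableOn_exp V ht₀.le hsub1 measurableSet_Ioo
  have hint2 : IntegrableOn (fun x => Real.exp (-t₀ * x)) (Ici lam) V :=
    integrableOn_exp V ht₀.le hsub2 measurableSet_Ici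
  have hdisj : Disjoint (Ioo (0:ℝ) lam) (Ici lam) := by
    rw [disjoint_left]
    rintro x ⟨_, h2⟩ h3
    exact absurd h3 (not_le.2 h2)
  have hlapsplit : lap V t₀ = (∫ x in Ioo (0:ℝ) lam, Real.exp (-t₀ * x) ∂V)
      + ∫ x in Ici lam, Real.exp (-t₀ * x) ∂V := by
    rw [lap, ← Ioo_union_Ici_eq_Ioi hlam,
      setIntegral_union hdisj measurableSet_Ici hint1 hint2]
  -- first piece
  have hpiece1 : (∫ x in Ioo (0:ℝ) lam, Real.exp (-t₀ * x) ∂V) ≤ δ/2 := by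
    have h1 : (∫ x in Ioo (0:ℝ) lam, Real.exp (-t₀ * x) ∂V)
        ≤ ∫ _x in Ioo (0:ℝ) lam, (1:ℝ) ∂V := by
      refine setIntegral_mono_on hint1 ((integrable_const 1).integrableOn)
        measurableSet_Ioo fun x hx => ?_
      rw [Real.exp_le_one_iff]
      nlinarith [hx.1]
    have h2 : (∫ _x in Ioo (0:ℝ) lam, (1:ℝ) ∂V) = (V (Ioo 0 lam)).toReal := by
      simp [setIntegral_const, measureReal_def]
    have h3 : (V (Ioo 0 lam)).toReal ≤ δ/2 := by
      have := measure_Ioo_lam_le (V := V) hc20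
      calc (V (Ioo 0 lam)).toReal ≤ (ENNReal.ofReal (δ/2)).toReal :=
            ENNReal.toReal_mono ENNReal.ofReal_ne_top this
        _ = δ/2 := ENNReal.toReal_ofReal hc20.le
    linarith
  -- second piece
  set cexp := Real.exp (-t₀ * lam) with hcexpdef
  have hcexp0 : 0 < cexp := Real.exp_pos _
  have hmeas : ∀ s : ℝ, MeasurableSet {x : ℝ | s < Real.exp (-t₀ * x)} :=
    fun s => measurableSet_lt measurable_const
      (Real.continuous_exp.comp (continuous_const.mul continuous_id)).measurable
  have hpiece2 : (∫ x in Ici lam, Real.exp (-t₀ * x) ∂V) ≤ δ/2 := by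
    have hlay : ENNReal.ofReal (∫ x in Ici lam, Real.exp (-t₀ * x) ∂V)
        = ∫⁻ s in Ioi (0:ℝ), (V.restrict (Ici lam)) {x : ℝ | s < Real.exp (-t₀ * x)} := by
      rw [ofReal_integral_eq_lintegral_ofReal hint2
        (Eventually.of_forall fun x => (Real.exp_pos _).le)]
      exact lintegral_eq_lintegral_meas_lt (V.restrict (Ici lam))
        (Eventually.of_forall fun x => (Real.exp_pos _).le)
        (Real.continuous_exp.comp (continuous_const.mul continuous_id)).measurable.aemeasurable
    have hbound : ∫⁻ s in Ioi (0:ℝ), (V.restrict (Ici lam)) {x : ℝ | s < Real.exp (-t₀ * x)}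
        ≤ ∫⁻ s in Ioi (0:ℝ), (Ioo (0:ℝ) cexp).indicator
            (fun s => ENNReal.ofReal (Real.exp (Real.log s * (-a)))) s := by
      refine setLIntegral_mono (Measurable.indicator
        (((Real.measurable_log.mul measurable_const).exp).ennreal_ofReal)
        measurableSet_Ioo) fun s hs => ?_
      have hs0 : (0:ℝ) < s := hs
      rcases le_or_gt cexp s with hsc | hsc
      · have hempty : {x : ℝ | s < Real.exp (-t₀ * x)} ∩ Ici lam = ∅ := by
          ext x
          simp only [mem_inter_iff, mem_setOf_eq, mem_Ici, mem_empty_iff_false, iff_false,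
            not_and]
          intro hx1 hx2
          have : Real.exp (-t₀ * x) ≤ cexp := by
            rw [hcexpdef, Real.exp_le_exp]
            nlinarith
          linarith
        rw [Measure.restrict_apply (hmeas s), hempty, measure_empty,
          indicator_of_notMem (by
            simp only [mem_Ioo, not_and, not_lt]
            intro _
            exact hsc)]
      · have hmem : s ∈ Ioo (0:ℝ) cexp := ⟨hs0, hsc⟩
        rw [indicator_of_mem hmem]
        set u := -Real.log s / t₀ with hudef
        have hulam : lam ≤ u := by
          have : Real.log s < -t₀ * lam := by
            have := Real.log_lt_log hs0 hsc
            rwa [hcexpdef, Real.log_exp] at this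
          rw [hudef, le_div_iff₀ ht₀]
          nlinarith
        have hsu : {x : ℝ | s < Real.exp (-t₀ * x)} ∩ Ici lam ⊆ Ioc 0 u := by
          rintro x ⟨hx1, hx2⟩
          have hxpos : 0 < x := lt_of_lt_of_le hlam hx2
          have hlog : Real.log s < -t₀ * x := by
            have := Real.log_lt_log hs0 hx1
            rwa [Real.log_exp] at this
          refine ⟨hxpos, ?_⟩
          rw [hudef, le_div_iff₀ ht₀]
          nlinarith
        have hcdfu : cdfV V u ≤ Real.exp (Real.log s * (-a)) := by
          have h1 : 1 + cdfV V u ≤ Real.exp (τ * u) :=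
            cdf_le_exp hlam (by rw [← hlamdef]; exact hulam)
          have h2 : Real.exp (τ * u) = Real.exp (Real.log s * (-a)) := by
            congr 1
            rw [hudef]
            have heq1 : τ * (-Real.log s / t₀) = Real.log s * (-(τ/t₀)) := by
              ring
            rw [heq1, hτt₀]
          linarith
        calc (V.restrict (Ici lam)) {x : ℝ | s < Real.exp (-t₀ * x)}
            = V ({x : ℝ | s < Real.exp (-t₀ * x)} ∩ Ici lam) :=
              Measure.restrict_apply (hmeas s)
          _ ≤ V (Ioc 0 u) := measure_mono hsu
          _ = ENNReal.ofReal (cdfV V u) := (ENNReal.ofReal_toReal (measure_ne_top V _)).symm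
          _ ≤ ENNReal.ofReal (Real.exp (Real.log s * (-a))) := ENNReal.ofReal_le_ofReal hcdfu
    have hIntOn : IntegrableOn (fun s : ℝ => s ^ (-a)) (Ioo 0 cexp) volume := by
      have h1 := intervalIntegral.intervalIntegrable_rpow' (a := 0) (b := cexp)
        (show (-1:ℝ) < -a by linarith)
      rw [intervalIntegrable_iff] at h1
      refine h1.mono_set ?_
      rw [uIoc_of_le hcexp0.le]
      exact Ioo_subset_Ioc_self
    have hindic : ∫⁻ s in Ioi (0:ℝ), (Ioo (0:ℝ) cexp).indicator
          (fun s => ENNReal.ofReal (Real.exp (Real.log s * (-a)))) s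
        = ∫⁻ s in Ioo (0:ℝ) cexp, ENNReal.ofReal (s ^ (-a)) := by
      rw [lintegral_indicator measurableSet_Ioo, Measure.restrict_restrict measurableSet_Ioo,
        inter_eq_left.2 (fun x hx => hx.1)]
      refine setLIntegral_congr_fun measurableSet_Ioo (fun s hs => ?_)
      rw [Real.rpow_def_of_pos hs.1]
    have hofreal : ∫⁻ s in Ioo (0:ℝ) cexp, ENNReal.ofReal (s ^ (-a))
        = ENNReal.ofReal (∫ s in Ioo (0:ℝ) cexp, s ^ (-a)) := by
      rw [ofReal_integral_eq_lintegral_ofReal hIntOn]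
      filter_upwards [ae_restrict_mem measurableSet_Ioo] with x hx
      exact Real.rpow_nonneg hx.1.le _
    have hval : (∫ s in Ioo (0:ℝ) cexp, s ^ (-a)) = cexp ^ (1-a) / (1-a) := by
      rw [← MeasureTheory.integral_Ioc_eq_integral_Ioo,
        ← intervalIntegral.integral_of_le hcexp0.le,
        integral_rpow (Or.inl (show (-1:ℝ) < -a by linarith)),
        Real.zero_rpow (show -a + 1 ≠ 0 by intro h; nlinarith),
        show -a + 1 = 1 - a by ring, sub_zero]
    -- numeric estimate
    have hrw : cexp ^ (1-a) = Real.exp (-((t₀ - τ) * lam)) := by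
      rw [hcexpdef, Real.rpow_def_of_pos (Real.exp_pos _), Real.log_exp]
      congr 1
      linear_combination lam * hta
    set B := (t₀ - τ) * lam with hBdef
    have hAτ : δ/(2+δ) ≤ τ * lam := by
      have h1 : Real.log (1 + δ/2) ≤ τ * lam := tau_lam_ge hc20 htot
      have h2 : (δ/2)/(1 + δ/2) ≤ Real.log (1 + δ/2) := log_lb (by positivity)
      have h3 : (δ/2)/(1 + δ/2) = δ/(2+δ) := by
        rw [div_eq_div_iff (by linarith) (by linarith)]
        ring
      linarith
    have h24 : (24:ℝ) ≤ 6/δ^2 := by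
      rw [le_div_iff₀ (by positivity)]
      nlinarith
    have hτt : τ < t₀ := by
      have h1 : 24 * τ ≤ 6/δ^2 * τ := mul_le_mul_of_nonneg_right h24 hτ.le
      rw [ht₀def]
      nlinarith
    have hBpos : 0 < B := mul_pos (sub_pos.2 hτt) hlam
    have hB' : 6 - δ^2 ≤ δ * (2+δ) * B := by
      have hBeq : B = (6 - δ^2)/δ^2 * (τ * lam) := by
        rw [hBdef, ht₀def]; field_simp
      rw [hBeq]
      have h4 : (6 - δ^2)/(δ*(2+δ)) ≤ (6 - δ^2)/δ^2 * (δ/(2+δ)) := by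
        rw [div_mul_div_comm, div_le_div_iff₀ (by positivity) (by positivity)]
        ring_nf
        nlinarith
      have h5 : (6 - δ^2)/δ^2 * (δ/(2+δ)) ≤ (6 - δ^2)/δ^2 * (τ * lam) :=
        mul_le_mul_of_nonneg_left hAτ (div_nonneg (by nlinarith) (by positivity))
      have h6 : (6 - δ^2)/(δ*(2+δ)) ≤ (6 - δ^2)/δ^2 * (τ * lam) := le_trans h4 h5
      rw [div_le_iff₀ (by positivity)] at h6
      nlinarith [h6]
    have hexpB : Real.exp (-B) ≤ 1/(1+B) := by
      rw [Real.exp_neg, ← one_div]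
      apply one_div_le_one_div_of_le (by linarith)
      linarith [Real.add_one_le_exp B]
    have h1a : 0 < 1 - a := by linarith
    have hfinal : cexp ^ (1-a) / (1-a) ≤ δ/2 := by
      rw [hrw]
      calc Real.exp (-B) / (1-a) ≤ (1/(1+B)) / (1-a) :=
            (div_le_div_iff_of_pos_right h1a).2 hexpB
        _ ≤ δ/2 := by
            rw [div_div, div_le_div_iff₀ (by positivity) (by norm_num : (0:ℝ) < 2)]
            have h6 : (0:ℝ) ≤ 1 - a := h1a.le
            nlinarith [hB', mul_le_mul_of_nonneg_right hB' h6, hδ, hδ2, hBpos, ha0, hadef]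
    have hP : (∫ x in Ici lam, Real.exp (-t₀ * x) ∂V) ≤ cexp ^ (1-a) / (1-a) := by
      have := le_trans hlay.le (le_trans hbound (le_of_eq (hindic.trans hofreal)))
      rw [hval] at this
      exact (ENNReal.ofReal_le_ofReal_iff (by positivity)).1 this
    linarith
  linarith [hpiece1, hpiece2, hlapsplit.le, hlapsplit.ge]

end Aux

theorem stmt_10 (V : Measure ℝ) [IsFiniteMeasure V] (hsupp : V (Iic 0) = 0)
    (δ : ℝ) (hδ : 0 < δ) (hδlt : δ < min (lap V 0) 1 / 2) :
    tauV V (2 * δ) ≤ TmixV V δ ∧ TmixV V δ ≤ 6 / δ ^ 2 * tauV V (δ / 2) := by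
  have hmin1 : min (lap V 0) 1 ≤ 1 := min_le_right _ _
  have hδhalf : δ < 1/2 := by
    have : min (lap V 0) 1 / 2 ≤ 1/2 := by linarith
    linarith
  have hlap0 : lap V 0 = (V (Ioi 0)).toReal := lap_zero_eq V
  have h2δtot : 2*δ < (V (Ioi 0)).toReal := by
    have h1 : min (lap V 0) 1 ≤ lap V 0 := min_le_left _ _
    rw [← hlap0]
    linarith
  have hhalftot : δ/2 < (V (Ioi 0)).toReal := by linarith
  have hτ2 : 0 < tauV V (δ/2) := tau_pos (by positivity) hhalftot
  have ht₀0 : 0 ≤ 6/δ^2 * tauV V (δ/2) := by positivity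
  have hlapt₀ : lap V (6/δ^2 * tauV V (δ/2)) ≤ δ := lap_t0_le hδ hδhalf.le hhalftot
  have hmem : 6/δ^2 * tauV V (δ/2) ∈ {t : ℝ | 0 ≤ t ∧ lap V t ≤ δ} := ⟨ht₀0, hlapt₀⟩
  have hbdd : BddBelow {t : ℝ | 0 ≤ t ∧ lap V t ≤ δ} := ⟨0, fun x hx => hx.1⟩
  constructor
  · -- lower bound
    have hlam2 : 0 < lamV V (2*δ) := lam_pos (by positivity) h2δtot
    rw [tauV, TmixV]
    refine csSup_le (Set.Nonempty.image _ ⟨lamV V (2*δ), mem_Ici.2 le_rfl⟩) ?_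
    rintro y ⟨l, hl, rfl⟩
    have hl2 : lamV V (2*δ) ≤ l := hl
    have hl0 : 0 < l := lt_of_lt_of_le hlam2 hl2
    have hcdf : 2*δ ≤ cdfV V l := cdf_ge_of_lam_le (by positivity) h2δtot hl2
    refine le_csInf ⟨_, hmem⟩ ?_
    rintro t ⟨ht0, hlapt⟩
    have hintOn : IntegrableOn (fun x => Real.exp (-t * x)) (Ioi 0) V :=
      integrableOn_exp V ht0 (fun x hx => hx) measurableSet_Ioi
    have hie1 : (∫ x in Ioc (0:ℝ) l, Real.exp (-t * x) ∂V) ≤ lap V t := by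
      rw [lap]
      exact setIntegral_mono_set hintOn (Eventually.of_forall fun x => (Real.exp_pos _).le)
        (HasSubset.Subset.eventuallyLE Ioc_subset_Ioi_self)
    have hie2 : Real.exp (-(t*l)) * cdfV V l ≤ ∫ x in Ioc (0:ℝ) l, Real.exp (-t * x) ∂V := by
      have h := setIntegral_mono_on ((integrable_const (Real.exp (-(t*l)))).integrableOn)
        (hintOn.mono_set Ioc_subset_Ioi_self)
        (measurableSet_Ioc : MeasurableSet (Ioc (0:ℝ) l))
        (fun x hx => Real.exp_le_exp.2 (by nlinarith [hx.1, hx.2]))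
      rwa [setIntegral_const, smul_eq_mul, mul_comm] at h
    have hkey : Real.exp (-(t*l)) * cdfV V l ≤ δ := le_trans hie2 (le_trans hie1 hlapt)
    have hcdf0 : 0 < cdfV V l := by linarith
    have hcle : cdfV V l ≤ Real.exp (t*l) * δ := by
      rw [Real.exp_neg] at hkey
      rwa [← inv_mul_le_iff₀ (Real.exp_pos _)]
    have hexp : 1 + cdfV V l ≤ Real.exp (t*l) := by
      nlinarith [hcle, hcdf, hδ, hδhalf, Real.exp_pos (t*l)]
    have hlog : Real.log (1 + cdfV V l) ≤ t * l := by
      have h := Real.log_le_log (by linarith) hexp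
      rwa [Real.log_exp] at h
    rw [div_le_iff₀ hl0]
    linarith
  · -- upper bound
    rw [TmixV]
    exact csInf_le hbdd hmem
end
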